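/- Optimal KMV resource allocation: given m positive integers k₁,...,k_m with sum b, and assuming the query index is drawn uniformly from {1,...,m}, the quantity T = (1/m)·Σ_q Σ_i min(k_q, k_i) is maximized over all such allocations when all k_i are equal (k_i = b/m, assuming m divides b). More precisely, for any allocation, Σ_q Σ_i min(k_q, k_i) ≤ m·b, with equality iff all k_i are equal. -/
import Mathlib


theorem optimal_kmv_allocation (m b : ℕ) (hm : 0 < m) (hb : 0 < b) (hdvd : m ∣ b)
    (k : Fin m → ℕ) (hpos : ∀ i, 0 < k i) (hsum : ∑ i, k i = b) :
    (∑ q : Fin m, ∑ i : Fin m, min (k q) (k i)) ≤ m * b ∧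
    ((∑ q : Fin m, ∑ i : Fin m, min (k q) (k i)) = m * b ↔ ∀ i j, k i = k j) := by
  have hle : ∀ q : Fin m, (∑ i, min (k q) (k i)) ≤ b := by
    intro q
    rw [← hsum]
    exact Finset.sum_le_sum fun i _ => min_le_right _ _
  have hconst : ∑ _q : Fin m, b = m * b := by
    simp [Finset.sum_const, Finset.card_univ]
  have htot : (∑ q : Fin m, ∑ i : Fin m, min (k q) (k i)) ≤ m * b := by
    rw [← hconst]
    exact Finset.sum_le_sum fun q _ => hle q
  refine ⟨htot, ?_, ?_⟩
  · intro heq i j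
    have h1 : ∀ q ∈ Finset.univ, (∑ i, min (k q) (k i)) = b := by
      rw [← Finset.sum_eq_sum_iff_of_le (fun q _ => hle q)]
      rw [heq, hconst]
    have h2 : ∀ q i₀ : Fin m, min (k q) (k i₀) = k i₀ := by
      intro q i₀
      have := h1 q (Finset.mem_univ q)
      rw [← hsum] at this
      exact (Finset.sum_eq_sum_iff_of_le
        (fun i _ => min_le_right (k q) (k i))).mp this i₀ (Finset.mem_univ i₀)
    have hij : k j ≤ k i := min_eq_right_iff.mp (h2 i j)
    have hji : k i ≤ k j := min_eq_right_iff.mp (h2 j i)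
    omega
  · intro hall
    have hkey : ∀ q i : Fin m, min (k q) (k i) = k i := fun q i => by rw [hall q i, min_self]
    calc (∑ q : Fin m, ∑ i : Fin m, min (k q) (k i))
        = ∑ _q : Fin m, ∑ i : Fin m, k i := by
          refine Finset.sum_congr rfl fun q _ => Finset.sum_congr rfl fun i _ => hkey q i
      _ = m * b := by rw [hsum]; simp [Finset.sum_const, Finset.card_univ]
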